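/- If β(k) and β(k+1) are p×m matrices (m = 2p) with β(k) j β(k)* = I_p and β(k+1) j β(k+1)* = I_p, then the p×p matrix β(k) j β(k+1)* is invertible. -/
import Mathlib

open Matrix

private lemma key_quad {n m k : Type*} [Fintype n] [Fintype m] [Fintype k]
    (B : Matrix n m ℂ) (M : Matrix m k ℂ) (c : n → ℂ) (z : k → ℂ) :
    star (Bᴴ *ᵥ c) ⬝ᵥ (M *ᵥ z) = star c ⬝ᵥ ((B * M) *ᵥ z) := by
  rw [star_mulVec, conjTranspose_conjTranspose, dotProduct_mulVec, vecMul_vecMul,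
    ← dotProduct_mulVec]

theorem stmt13 (p : ℕ) (hp : 1 ≤ p)
    (j : Matrix (Fin p ⊕ Fin p) (Fin p ⊕ Fin p) ℂ)
    (hj : j = Matrix.fromBlocks 1 0 0 (-1))
    (b0 b1 : Matrix (Fin p) (Fin p ⊕ Fin p) ℂ)
    (h0 : b0 * j * b0ᴴ = 1) (h1 : b1 * j * b1ᴴ = 1) :
    IsUnit (b0 * j * b1ᴴ).det := by
  by_contra hdet
  rw [isUnit_iff_ne_zero, ne_eq, not_not] at hdet
  obtain ⟨v, hv, hAv⟩ := (Matrix.exists_mulVec_eq_zero_iff).mpr hdet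
  set w : (Fin p ⊕ Fin p) → ℂ := b1ᴴ *ᵥ v with hw
  -- pad to a square matrix with a zero row to find a kernel vector
  set N : Matrix (Fin p ⊕ Unit) (Fin p ⊕ Unit) ℂ :=
    fun r c => Sum.elim
      (fun i => Sum.elim (fun i' => b0ᴴ (Sum.inl i) i') (fun _ => w (Sum.inl i)) c)
      (fun _ => 0) r with hN
  have hNdet : N.det = 0 := by
    apply Matrix.det_eq_zero_of_row_eq_zero (Sum.inr ())
    intro c; rfl
  obtain ⟨y, hy, hNy⟩ := (Matrix.exists_mulVec_eq_zero_iff).mpr hNdet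
  set u₁ : Fin p → ℂ := fun i => y (Sum.inl i) with hu₁
  set t : ℂ := y (Sum.inr ()) with ht
  set x : (Fin p ⊕ Fin p) → ℂ := b0ᴴ *ᵥ u₁ + t • w with hx
  -- the first block of x vanishes
  have hx1 : ∀ i : Fin p, x (Sum.inl i) = 0 := by
    intro i
    have h := congrFun hNy (Sum.inl i)
    simp only [Matrix.mulVec, dotProduct, hN, Fintype.sum_sum_type,
      Sum.elim_inl, Sum.elim_inr, Pi.zero_apply] at h
    simp only [hx, Pi.add_apply, Pi.smul_apply, smul_eq_mul, Matrix.mulVec,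
      dotProduct, hu₁, ht]
    have hs : (∑ z : Unit, w (Sum.inl i) * y (Sum.inr z)) = w (Sum.inl i) * y (Sum.inr ()) := by
      simp
    rw [hs] at h
    linear_combination h
  have hjH : jᴴ = j := by
    subst hj
    simp [Matrix.fromBlocks_conjTranspose]
  have hjx : j *ᵥ x = Sum.elim (fun i => x (Sum.inl i)) (fun i => -x (Sum.inr i)) := by
    subst hj
    rw [Matrix.fromBlocks_mulVec]
    funext k
    cases k with
    | inl i => simp [Matrix.one_mulVec, Matrix.zero_mulVec]
    | inr i => simp [Matrix.neg_mulVec, Matrix.one_mulVec, Matrix.zero_mulVec]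
  have hLHS : star x ⬝ᵥ (j *ᵥ x) = -∑ i : Fin p, star (x (Sum.inr i)) * x (Sum.inr i) := by
    rw [hjx]
    simp only [dotProduct, Fintype.sum_sum_type, Sum.elim_inl, Sum.elim_inr,
      Pi.star_apply]
    have hz : ∀ i : Fin p, star (x (Sum.inl i)) * x (Sum.inl i) = 0 := fun i => by
      rw [hx1 i, mul_zero]
    simp only [mul_neg, ← Finset.sum_neg_distrib]
    rw [Finset.sum_eq_zero (fun i _ => by rw [hx1 i]; simp)]
    ring
  have hRHS : star x ⬝ᵥ (j *ᵥ x)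
      = star u₁ ⬝ᵥ u₁ + (star t * t) * (star v ⬝ᵥ v) := by
    rw [hx]
    rw [Matrix.mulVec_add, Matrix.mulVec_smul, star_add, star_smul]
    rw [add_dotProduct, dotProduct_add, dotProduct_add]
    rw [smul_dotProduct, smul_dotProduct, dotProduct_smul,
      dotProduct_smul]
    have hA : star (b0ᴴ *ᵥ u₁) ⬝ᵥ (j *ᵥ (b0ᴴ *ᵥ u₁)) = star u₁ ⬝ᵥ u₁ := by
      rw [key_quad, Matrix.mulVec_mulVec, h0, Matrix.one_mulVec]
    have hB : star (b0ᴴ *ᵥ u₁) ⬝ᵥ (j *ᵥ w) = 0 := by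
      rw [hw, key_quad, Matrix.mulVec_mulVec, hAv, dotProduct_zero]
    have hC : star w ⬝ᵥ (j *ᵥ (b0ᴴ *ᵥ u₁)) = 0 := by
      rw [hw, key_quad, Matrix.mulVec_mulVec]
      have : b1 * j * b0ᴴ = (b0 * j * b1ᴴ)ᴴ := by
        simp [Matrix.conjTranspose_mul, hjH, Matrix.mul_assoc]
      rw [this, Matrix.dotProduct_mulVec, ← Matrix.star_mulVec,
        hAv, star_zero, zero_dotProduct]
    have hD : star w ⬝ᵥ (j *ᵥ w) = star v ⬝ᵥ v := by
      rw [hw, key_quad, Matrix.mulVec_mulVec, h1, Matrix.one_mulVec]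
    rw [hA, hB, hC, hD]
    simp only [smul_eq_mul, smul_zero, mul_zero, add_zero, zero_add, smul_eq_mul]
    ring
  -- convert to a real equation
  set S1 : ℝ := ∑ i : Fin p, Complex.normSq (u₁ i) with hS1
  set S2 : ℝ := Complex.normSq t with hS2
  set S3 : ℝ := ∑ i : Fin p, Complex.normSq (v i) with hS3
  set S4 : ℝ := ∑ i : Fin p, Complex.normSq (x (Sum.inr i)) with hS4
  have hcast : ∀ z : ℂ, star z * z = (Complex.normSq z : ℂ) := by
    intro z
    rw [Complex.star_def, mul_comm, Complex.mul_conj]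
  have hEqC : (S1 : ℂ) + (S2 : ℂ) * (S3 : ℂ) + (S4 : ℂ) = 0 := by
    have h1' : star u₁ ⬝ᵥ u₁ = (S1 : ℂ) := by
      simp only [dotProduct, Pi.star_apply, hcast, hS1]
      push_cast
      rfl
    have h2' : star t * t = (S2 : ℂ) := hcast t
    have h3' : star v ⬝ᵥ v = (S3 : ℂ) := by
      simp only [dotProduct, Pi.star_apply, hcast, hS3]
      push_cast
      rfl
    have h4' : ∑ i : Fin p, star (x (Sum.inr i)) * x (Sum.inr i) = (S4 : ℂ) := by
      simp only [hcast, hS4]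
      push_cast
      rfl
    have := hRHS.symm.trans hLHS
    rw [h1', h2', h3', h4'] at this
    linear_combination this
  have hEqR : S1 + S2 * S3 + S4 = 0 := by exact_mod_cast hEqC
  have hS1nn : 0 ≤ S1 := Finset.sum_nonneg fun i _ => Complex.normSq_nonneg _
  have hS2nn : 0 ≤ S2 := Complex.normSq_nonneg _
  have hS4nn : 0 ≤ S4 := Finset.sum_nonneg fun i _ => Complex.normSq_nonneg _
  have hS3pos : 0 < S3 := by
    obtain ⟨i, hi⟩ := Function.ne_iff.mp hv
    refine Finset.sum_pos' (fun i _ => Complex.normSq_nonneg _) ⟨i, Finset.mem_univ _, ?_⟩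
    exact Complex.normSq_pos.mpr hi
  have hS23nn : 0 ≤ S2 * S3 := mul_nonneg hS2nn hS3pos.le
  have hS1z : S1 = 0 := by nlinarith
  have hS2z : S2 = 0 := by nlinarith
  have hu₁z : ∀ i, u₁ i = 0 := by
    intro i
    have := (Finset.sum_eq_zero_iff_of_nonneg
      (fun i _ => Complex.normSq_nonneg (u₁ i))).mp hS1z i (Finset.mem_univ i)
    exact Complex.normSq_eq_zero.mp this
  have htz : t = 0 := Complex.normSq_eq_zero.mp hS2z
  apply hy
  funext k
  cases k with
  | inl i => exact hu₁z i
  | inr u => cases u; exact htz
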